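/- Axiom (R8) (the right-hand distributive law) is independent of the remaining Tarski axioms: let A be any symmetric integral relation algebra (converse is the identity, and r;s=0 implies r=0 or s=0) with at least two elements, and modify relative multiplication only by setting 0;0=1. In the modified algebra, (R1)-(R7), (R9), (R10) hold but (R8) fails, since (0+1');0 = 0 while 0;0 + 1';0 = 1. -/
import Mathlib


/-- Axiom (R8) (the right-hand distributive law) is independent of the
remaining Tarski axioms: let (A, add, compl, mul, conv, e) be any symmetric
integral relation algebra (satisfying (R1)-(R10), with converse the identity,
at least two elements, and r;s=0 implying r=0 or s=0), and modify relative
multiplication only by setting 0;0 = 1 (where 0 = -(1'+-1') and 1 = 1'+-1').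
In the modified algebra, (R1)-(R7), (R9), (R10) hold but (R8) fails, since
(0+1');0 = 0 while 0;0 + 1';0 = 1. -/
theorem R8_independent {A : Type*} [DecidableEq A] (add : A → A → A)
    (compl : A → A) (mul : A → A → A) (conv : A → A) (e : A)
    (R1 : ∀ r s, add r s = add s r)
    (R2 : ∀ r s t, add r (add s t) = add (add r s) t)
    (R3 : ∀ r s, add (compl (add (compl r) s)) (compl (add (compl r) (compl s))) = r)
    (R4 : ∀ r s t, mul r (mul s t) = mul (mul r s) t)
    (R5 : ∀ r, mul r e = r)
    (R6 : ∀ r, conv (conv r) = r)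
    (R7 : ∀ r s, conv (mul r s) = mul (conv s) (conv r))
    (R8 : ∀ r s t, mul (add r s) t = add (mul r t) (mul s t))
    (R9 : ∀ r s, conv (add r s) = add (conv r) (conv s))
    (R10 : ∀ r s, add (mul (conv r) (compl (mul r s))) (compl s) = compl s)
    (symmetric : ∀ r, conv r = r)
    (h2 : ∃ x y : A, x ≠ y)
    (integral : ∀ r s, mul r s = compl (add e (compl e)) →
      r = compl (add e (compl e)) ∨ s = compl (add e (compl e))) :
    -- 0 = -(1'+-1'), 1 = 1'+-1', and the modified relative multiplication
    let zero : A := compl (add e (compl e))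
    let one : A := add e (compl e)
    let mul' : A → A → A := fun r s => if r = zero ∧ s = zero then one else mul r s
    (∀ r s, add r s = add s r) ∧
    (∀ r s t, add r (add s t) = add (add r s) t) ∧
    (∀ r s, add (compl (add (compl r) s)) (compl (add (compl r) (compl s))) = r) ∧
    (∀ r s t, mul' r (mul' s t) = mul' (mul' r s) t) ∧
    (∀ r, mul' r e = r) ∧
    (∀ r, conv (conv r) = r) ∧
    (∀ r s, conv (mul' r s) = mul' (conv s) (conv r)) ∧
    (∀ r s, conv (add r s) = add (conv r) (conv s)) ∧
    (∀ r s, add (mul' (conv r) (compl (mul' r s))) (compl s) = compl s) ∧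
    ¬ (∀ r s t, mul' (add r s) t = add (mul' r t) (mul' s t)) ∧
    mul' (add zero e) zero = zero ∧
    add (mul' zero zero) (mul' e zero) = one := by
  intro zero one mul'
  -- basic AC lemmas
  have hA' : ∀ a b c, add (add a b) c = add a (add b c) := fun a b c => (R2 a b c).symm
  have hlc : ∀ a b c, add a (add b c) = add b (add a c) := fun a b c => by
    rw [R2, R1 a b, ← R2]
  -- commutativity of mul
  have mcomm : ∀ r s, mul r s = mul s r := fun r s => by
    rw [← symmetric (mul r s), R7 r s, symmetric s, symmetric r]
  have mule : ∀ s, mul e s = s := fun s => by rw [mcomm, R5]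
  -- idempotence of complements, from R10 with r := e
  have I1 : ∀ s, add (compl s) (compl s) = compl s := fun s => by
    have h := R10 e s
    rw [symmetric e] at h
    rw [mule] at h
    rw [mule] at h
    exact h
  -- idempotence
  have idem : ∀ x, add x x = x := by
    intro x
    have h := R3 x x
    calc add x x
        = add (add (compl (add (compl x) x)) (compl (add (compl x) (compl x))))
            (add (compl (add (compl x) x)) (compl (add (compl x) (compl x)))) :=
          congrArg₂ add h.symm h.symm
      _ = add (add (compl (add (compl x) x)) (compl (add (compl x) x)))
            (add (compl (add (compl x) (compl x))) (compl (add (compl x) (compl x)))) := by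
          simp only [hA', R1, hlc]
      _ = add (compl (add (compl x) x))
            (add (compl (add (compl x) (compl x))) (compl (add (compl x) (compl x)))) :=
          congrArg (fun t => add t
            (add (compl (add (compl x) (compl x))) (compl (add (compl x) (compl x)))))
            (I1 (add (compl x) x))
      _ = add (compl (add (compl x) x)) (compl (add (compl x) (compl x))) :=
          congrArg (add (compl (add (compl x) x))) (I1 (add (compl x) (compl x)))
      _ = x := h
  -- absorption
  have A1 : ∀ x y, add x (compl (add (compl x) y)) = x := by
    intro x y
    have h := R3 x y
    calc add x (compl (add (compl x) y))
        = add (add (compl (add (compl x) y)) (compl (add (compl x) (compl y))))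
            (compl (add (compl x) y)) :=
          congrArg (fun t => add t (compl (add (compl x) y))) h.symm
      _ = add (add (compl (add (compl x) y)) (compl (add (compl x) y)))
            (compl (add (compl x) (compl y))) := by
          simp only [hA', R1, hlc]
      _ = add (compl (add (compl x) y)) (compl (add (compl x) (compl y))) :=
          congrArg (fun t => add t (compl (add (compl x) (compl y)))) (I1 (add (compl x) y))
      _ = x := h
  -- every unit y + y' absorbs everything
  have topabs : ∀ y x, add (add y (compl y)) x = add y (compl y) := by
    intro y x
    have dc : compl (add (compl (add y (compl y))) (compl x))
        = compl (add (compl x) (compl (add y (compl y)))) :=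
      congrArg compl (R1 (compl (add y (compl y))) (compl x))
    have P1 := R3 (add y (compl y)) (compl x)
    have P2 := R3 x (compl (add y (compl y)))
    have Z1 : add y (compl (add y (compl y))) = y := by
      rw [R1 y (compl y)]
      exact A1 y y
    have Z2 : add (compl (add y (compl y)))
        (compl (add (compl x) (compl (compl (add y (compl y))))))
        = compl (add y (compl y)) := by
      have h := A1 (compl (add y (compl y))) (compl x)
      rw [R1 (compl (compl (add y (compl y)))) (compl x)] at h
      exact h
    calc add (add y (compl y)) x
        = add (add y (compl y))
            (add (compl (add (compl x) (compl (add y (compl y)))))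
              (compl (add (compl x) (compl (compl (add y (compl y))))))) :=
          congrArg (add (add y (compl y))) P2.symm
      _ = add (add (compl (add (compl (add y (compl y))) (compl x)))
              (compl (add (compl (add y (compl y))) (compl (compl x)))))
            (add (compl (add (compl x) (compl (add y (compl y)))))
              (compl (add (compl x) (compl (compl (add y (compl y))))))) :=
          congrArg (fun t => add t
            (add (compl (add (compl x) (compl (add y (compl y)))))
              (compl (add (compl x) (compl (compl (add y (compl y)))))))) P1.symm
      _ = add (add (compl (add (compl x) (compl (add y (compl y)))))
              (compl (add (compl (add y (compl y))) (compl (compl x)))))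
            (add (compl (add (compl x) (compl (add y (compl y)))))
              (compl (add (compl x) (compl (compl (add y (compl y))))))) :=
          congrArg (fun t => add (add t
              (compl (add (compl (add y (compl y))) (compl (compl x)))))
            (add (compl (add (compl x) (compl (add y (compl y)))))
              (compl (add (compl x) (compl (compl (add y (compl y)))))))) dc
      _ = add (add (compl (add (compl x) (compl (add y (compl y)))))
              (compl (add (compl x) (compl (add y (compl y))))))
            (add (compl (add (compl (add y (compl y))) (compl (compl x))))
              (compl (add (compl x) (compl (compl (add y (compl y))))))) := by
          simp only [hA', R1, hlc]
      _ = add (compl (add (compl x) (compl (add y (compl y)))))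
            (add (compl (add (compl (add y (compl y))) (compl (compl x))))
              (compl (add (compl x) (compl (compl (add y (compl y))))))) :=
          congrArg (fun t => add t
            (add (compl (add (compl (add y (compl y))) (compl (compl x))))
              (compl (add (compl x) (compl (compl (add y (compl y)))))))) 
            (I1 (add (compl x) (compl (add y (compl y)))))
      _ = add (add (compl (add (compl (add y (compl y))) (compl x)))
              (compl (add (compl (add y (compl y))) (compl (compl x)))))
            (compl (add (compl x) (compl (compl (add y (compl y)))))) := by
          rw [← dc]; simp only [hA', R1, hlc]
      _ = add (add y (compl y))
            (compl (add (compl x) (compl (compl (add y (compl y)))))) :=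
          congrArg (fun t => add t
            (compl (add (compl x) (compl (compl (add y (compl y))))))) P1
      _ = add (add (add y (compl (add y (compl y)))) (compl y))
            (compl (add (compl x) (compl (compl (add y (compl y)))))) :=
          congrArg (fun t => add (add t (compl y))
            (compl (add (compl x) (compl (compl (add y (compl y))))))) Z1.symm
      _ = add (add y (compl y))
            (add (compl (add y (compl y)))
              (compl (add (compl x) (compl (compl (add y (compl y))))))) := by
          simp only [hA', R1, hlc]
      _ = add (add y (compl y)) (compl (add y (compl y))) :=
          congrArg (add (add y (compl y))) Z2
      _ = add (add y (compl (add y (compl y)))) (compl y) := by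
          simp only [hA', R1, hlc]
      _ = add y (compl y) := congrArg (fun t => add t (compl y)) Z1
  -- all units are equal
  have units : ∀ x y, add x (compl x) = add y (compl y) := by
    intro x y
    have h1 := topabs x (add y (compl y))
    calc add x (compl x) = add (add x (compl x)) (add y (compl y)) := h1.symm
      _ = add (add y (compl y)) (add x (compl x)) := R1 _ _
      _ = add y (compl y) := topabs y (add x (compl x))
  have hzero_def : zero = compl (add e (compl e)) := rfl
  have hone_def : one = add e (compl e) := rfl
  have hzo : compl one = zero := rfl
  -- zero is a neutral element
  have hz1 : ∀ x : A, add x zero = x := by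
    intro x
    rw [hzero_def, ← units x e, R1 x (compl x)]
    exact A1 x x
  have N3 : ∀ x : A, add x (compl x) = one := fun x => units x e
  have N4 : ∀ x : A, add x one = one := by
    intro x
    rw [hone_def, R1 x (add e (compl e))]
    exact topabs e x
  have N2 : compl zero = one := by
    have h := N3 zero
    rw [R1 zero (compl zero)] at h
    rw [hz1 (compl zero)] at h
    exact h
  have hne : one ≠ zero := by
    intro h
    obtain ⟨x, y, hxy⟩ := h2
    have key : ∀ z : A, z = one := by
      intro z
      rw [← N4 z, h, hz1]
    exact hxy ((key x).trans (key y).symm)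
  -- multiplication facts
  have W1 : mul one (compl (mul one one)) = zero := by
    have h := R10 one one
    rw [symmetric one] at h
    rw [hzo] at h
    rw [hz1] at h
    exact h
  have W2 : mul zero one = zero := by
    have h8 := R8 zero (compl (mul one one)) one
    rw [R1 zero (compl (mul one one))] at h8
    rw [hz1 (compl (mul one one))] at h8
    rw [mcomm (compl (mul one one)) one] at h8
    rw [W1] at h8
    rw [hz1 (mul zero one)] at h8
    exact h8.symm
  have hm0 : ∀ x, mul x zero = zero := by
    intro x
    have h8 := R8 x one zero
    rw [N4 x] at h8
    rw [mcomm one zero] at h8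
    rw [W2] at h8
    rw [hz1 (mul x zero)] at h8
    exact h8.symm
  have h0m : ∀ x, mul zero x = zero := fun x => by rw [mcomm]; exact hm0 x
  have e_ne : e ≠ zero := by
    intro h
    obtain ⟨x, y, hxy⟩ := h2
    have key : ∀ z : A, z = zero := by
      intro z
      rw [← R5 z, h, hm0 z]
    exact hxy ((key x).trans (key y).symm)
  have hm1 : ∀ x, x ≠ zero → mul x one = one := by
    intro x hx
    have h := R10 x one
    rw [symmetric x, hzo, hz1] at h
    rcases integral x (compl (mul x one)) h with h' | h'
    · exact absurd h' hx
    · have h3 := N3 (mul x one)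
      rw [h', hz1] at h3
      exact h3
  have h1m : ∀ x, x ≠ zero → mul one x = one := fun x hx => by rw [mcomm]; exact hm1 x hx
  have integral' : ∀ x y, x ≠ zero → y ≠ zero → mul x y ≠ zero := by
    intro x y hx hy h
    rcases integral x y h with h' | h'
    · exact hx h'
    · exact hy h'
  -- modified multiplication unfolding lemmas
  have m'zz : mul' zero zero = one := by
    show (if zero = zero ∧ zero = zero then one else mul zero zero) = one
    exact if_pos ⟨rfl, rfl⟩
  have m'nz : ∀ r s, r ≠ zero → mul' r s = mul r s := by
    intro r s h
    show (if r = zero ∧ s = zero then one else mul r s) = mul r s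
    exact if_neg (fun hc => h hc.1)
  have m'zn : ∀ r s, s ≠ zero → mul' r s = mul r s := by
    intro r s h
    show (if r = zero ∧ s = zero then one else mul r s) = mul r s
    exact if_neg (fun hc => h hc.2)
  -- associativity of mul'
  have hassoc : ∀ r s t, mul' r (mul' s t) = mul' (mul' r s) t := by
    intro r s t
    by_cases hr : r = zero
    · subst hr
      by_cases hs : s = zero
      · subst hs
        by_cases ht : t = zero
        · subst ht
          rw [m'zz, m'zn zero one hne, m'nz one zero hne, h0m one, hm0 one]
        · rw [m'zn zero t ht, h0m t, m'zz, m'nz one t hne, h1m t ht]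
      · by_cases ht : t = zero
        · subst ht
          rw [m'nz s zero hs, hm0 s, m'zn zero s hs, h0m s]
        · have hst : mul s t ≠ zero := integral' s t hs ht
          rw [m'zn s t ht, m'zn zero (mul s t) hst, h0m (mul s t),
            m'zn zero s hs, h0m s, m'zn zero t ht, h0m t]
    · by_cases hs : s = zero
      · subst hs
        by_cases ht : t = zero
        · subst ht
          rw [m'zz, m'zn r one hne, hm1 r hr, m'nz r zero hr, hm0 r, m'zz]
        · rw [m'zn zero t ht, h0m t, m'nz r zero hr, hm0 r, m'zn zero t ht, h0m t]
      · by_cases ht : t = zero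
        · subst ht
          rw [m'nz s zero hs, hm0 s, m'nz r zero hr, hm0 r, m'zn r s hs,
            m'nz (mul r s) zero (integral' r s hr hs), hm0 (mul r s)]
        · rw [m'zn s t ht, m'zn r (mul s t) (integral' s t hs ht), m'zn r s hs,
            m'zn (mul r s) t ht, R4 r s t]
  -- R5 for mul'
  have hR5' : ∀ r, mul' r e = r := by
    intro r
    rw [m'zn r e e_ne]
    exact R5 r
  -- R7 for mul'
  have hR7' : ∀ r s, conv (mul' r s) = mul' (conv s) (conv r) := by
    intro r s
    rw [symmetric (mul' r s), symmetric s, symmetric r]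
    by_cases h : r = zero ∧ s = zero
    · obtain ⟨h1, hsz⟩ := h
      subst h1; subst hsz; rfl
    · show (if r = zero ∧ s = zero then one else mul r s)
        = (if s = zero ∧ r = zero then one else mul s r)
      rw [if_neg h, if_neg (fun hc => h ⟨hc.2, hc.1⟩)]
      exact mcomm r s
  -- R10 for mul'
  have hR10' : ∀ r s, add (mul' (conv r) (compl (mul' r s))) (compl s) = compl s := by
    intro r s
    rw [symmetric r]
    by_cases hr : r = zero
    · subst hr
      by_cases hs : s = zero
      · subst hs
        rw [m'zz, hzo, m'zz, N2]
        exact idem one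
      · rw [m'zn zero s hs, h0m s, N2, m'zn zero one hne, h0m one, R1 zero (compl s)]
        exact hz1 (compl s)
    · rw [m'nz r s hr, m'nz r (compl (mul r s)) hr]
      have h := R10 r s
      rw [symmetric r] at h
      exact h
  -- the two counterexample computations
  have g1 : mul' (add zero e) zero = zero := by
    have hze : add zero e = e := by rw [R1 zero e]; exact hz1 e
    rw [hze, m'nz e zero e_ne, hm0 e]
  have g2 : add (mul' zero zero) (mul' e zero) = one := by
    rw [m'zz, m'nz e zero e_ne, hm0 e]
    exact hz1 one
  have hnR8 : ¬ (∀ r s t, mul' (add r s) t = add (mul' r t) (mul' s t)) := by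
    intro h
    exact hne (((g1.symm.trans (h zero e zero)).trans g2).symm)
  exact ⟨R1, R2, R3, hassoc, hR5', R6, hR7', R9, hR10', hnR8, g1, g2⟩
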